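/- Let f̃(x,h) := Σ_{i=1}^s bᵢ kᵢ(x,h), where k₁(x,h),…,k_s(x,h) are the stages of an s-stage Runge–Kutta method with Σ_{i=1}^s bᵢ = 1, i.e. kᵢ(x,h) = f(x + hΣⱼaᵢⱼkⱼ(x,h)). Let B ⊂ ℝ^d be bounded, R₀ > 0, and let L₀ satisfy |f(u)−f(v)| ≤ L₀|u−v| and |i(u)−i(v)| ≤ L₀|u−v| for all x ∈ B, u,v ∈ B_{R₀}(x), and |f(x)| ≤ C₁|i(x)| on B. Set A₁ := maxᵢΣⱼ|aᵢⱼ|, A₂ := Σᵢ|bᵢ|, R := 2R₀, L := L₀A₂·max{2, A₁(C₁ + L₀/R₀)}, and H := min{1/(2L₀A₁), 1/(2A₁(C₁+L₀/R₀)R₀), 1/(2L₀A₁(C₁+L₀/R₀)R₀)}. Then f̃(x,0) = f(x) for every x ∈ B, and for each x ∈ B, all u, v ∈ B_R(x) and h ∈ [0,H): |f̃(u,h) − f̃(v,h)| ≤ L|u−v| and |f̃(x,h) − f̃(x,0)| ≤ Lh|i(x)|. -/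

import Mathlib

open scoped RealInnerProductSpace

noncomputable section

/-- Membership in the ball `B_R(x) = {z : ‖z − x‖ ≤ ‖i x‖ / R}`. -/
def InBall {d : ℕ} (i : EuclideanSpace ℝ (Fin d) → EuclideanSpace ℝ (Fin d)) (R : ℝ)
    (x z : EuclideanSpace ℝ (Fin d)) : Prop :=
  ‖z - x‖ ≤ ‖i x‖ / R

/-- The consistency and local Lipschitz conditions at the point `x` for an approximation
`g(·,·,·)` of `target` (conditions (11z)/(12z) of the paper, with balls measured via `i`). -/
def ConsistAt {d : ℕ} (i target : EuclideanSpace ℝ (Fin d) → EuclideanSpace ℝ (Fin d))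
    (x : EuclideanSpace ℝ (Fin d)) (R L H : ℝ)
    (g : EuclideanSpace ℝ (Fin d) → EuclideanSpace ℝ (Fin d) → ℝ → EuclideanSpace ℝ (Fin d)) :
    Prop :=
  g x x 0 = target x ∧
    ∀ h : ℝ, 0 ≤ h → h < H →
      (∀ u v w, InBall i R x u → InBall i R x v → InBall i R x w →
        ‖g u v h - g w v h‖ ≤ L * ‖u - w‖ ∧ ‖g u v h - g u w h‖ ≤ L * ‖v - w‖) ∧
      ‖g x x h - g x x 0‖ ≤ L * h * ‖i x‖

/-- The discrete gradient step equation `x' = x + h S̃(x,x',h) ī(x,x')`, where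
`S̃ = (f̃ ĩᵀ − ĩ f̃ᵀ)/(î·ĭ)`, so that
`S̃ ī = ((ĩ·ī) f̃ − (f̃·ī) ĩ)/(î·ĭ)`. -/
def DGEq {d : ℕ}
    (ftil itil ihat ibrev :
      EuclideanSpace ℝ (Fin d) → EuclideanSpace ℝ (Fin d) → ℝ → EuclideanSpace ℝ (Fin d))
    (ibar : EuclideanSpace ℝ (Fin d) → EuclideanSpace ℝ (Fin d) → EuclideanSpace ℝ (Fin d))
    (x : EuclideanSpace ℝ (Fin d)) (h : ℝ) (x' : EuclideanSpace ℝ (Fin d)) : Prop :=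
  x' = x + (h / ⟪ihat x x' h, ibrev x x' h⟫) •
    (⟪itil x x' h, ibar x x'⟫ • ftil x x' h - ⟪ftil x x' h, ibar x x'⟫ • itil x x' h)

/-- Lemma: `f̃` built from a consistent Runge–Kutta method satisfies the
consistency and Lipschitz conditions. -/
theorem runge_kutta_ftil_consistency_lipschitz {d s : ℕ}
    (f : EuclideanSpace ℝ (Fin d) → EuclideanSpace ℝ (Fin d))
    (I : EuclideanSpace ℝ (Fin d) → ℝ)
    (i : EuclideanSpace ℝ (Fin d) → EuclideanSpace ℝ (Fin d))
    (hgrad : ∀ x, HasGradientAt I (i x) x)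
    (B : Set (EuclideanSpace ℝ (Fin d))) (hB : Bornology.IsBounded B)
    (R₀ L₀ C₁ : ℝ) (hR₀ : 0 < R₀) (hL₀ : 0 < L₀) (hC₁ : 0 < C₁)
    (hflip : ∀ x ∈ B, ∀ u v : EuclideanSpace ℝ (Fin d),
      InBall i R₀ x u → InBall i R₀ x v → ‖f u - f v‖ ≤ L₀ * ‖u - v‖)
    (hilip : ∀ x ∈ B, ∀ u v : EuclideanSpace ℝ (Fin d),
      InBall i R₀ x u → InBall i R₀ x v → ‖i u - i v‖ ≤ L₀ * ‖u - v‖)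
    (hfC : ∀ x ∈ B, ‖f x‖ ≤ C₁ * ‖i x‖)
    (a : Fin s → Fin s → ℝ) (b : Fin s → ℝ) (hb : ∑ idx : Fin s, b idx = 1)
    (A₁ A₂ : ℝ) (hA₁ : A₁ = ⨆ idx : Fin s, ∑ j : Fin s, |a idx j|)
    (hA₂ : A₂ = ∑ idx : Fin s, |b idx|)
    (R L H : ℝ) (hRdef : R = 2 * R₀)
    (hLdef : L = L₀ * A₂ * max 2 (A₁ * (C₁ + L₀ / R₀)))
    (hHdef : H = min (1 / (2 * L₀ * A₁))
      (min (1 / (2 * A₁ * (C₁ + L₀ / R₀) * R₀)) (1 / (2 * L₀ * A₁ * (C₁ + L₀ / R₀) * R₀))))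
    (K : EuclideanSpace ℝ (Fin d) → ℝ → Fin s → EuclideanSpace ℝ (Fin d))
    (hK : ∀ x ∈ B, ∀ h : ℝ, 0 ≤ h → h < H →
      ∀ u : EuclideanSpace ℝ (Fin d), InBall i (2 * R₀) x u →
        (∀ idx : Fin s, ‖K u h idx - f x‖ ≤ L₀ * ‖i x‖ / R₀) ∧
        ∀ idx : Fin s, K u h idx = f (u + h • ∑ j : Fin s, a idx j • K u h j))
    (hK0 : ∀ x ∈ B, ∀ u : EuclideanSpace ℝ (Fin d), InBall i (2 * R₀) x u →
      ∀ idx : Fin s, K u 0 idx = f u)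
    (ftil : EuclideanSpace ℝ (Fin d) → ℝ → EuclideanSpace ℝ (Fin d))
    (hftil : ∀ (u : EuclideanSpace ℝ (Fin d)) (h : ℝ), ftil u h = ∑ idx : Fin s, b idx • K u h idx) :
    (∀ x ∈ B, ftil x 0 = f x) ∧
    ∀ x ∈ B, ∀ h : ℝ, 0 ≤ h → h < H →
      (∀ u v : EuclideanSpace ℝ (Fin d), InBall i R x u → InBall i R x v →
        ‖ftil u h - ftil v h‖ ≤ L * ‖u - v‖) ∧
      ‖ftil x h - ftil x 0‖ ≤ L * h * ‖i x‖ := by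
  have hs0 : s ≠ 0 := by rintro rfl; simp at hb
  haveI : Nonempty (Fin s) := Fin.pos_iff_nonempty.mp (Nat.pos_of_ne_zero hs0)
  have hR₀ne : R₀ ≠ 0 := ne_of_gt hR₀
  have part1 : ∀ x ∈ B, ftil x 0 = f x := by
    intro x hx
    have hxball : InBall i (2 * R₀) x x := by
      simp only [InBall, sub_self, norm_zero]
      positivity
    rw [hftil]
    rw [Finset.sum_congr rfl fun idx _ => by rw [hK0 x hx x hxball idx]]
    rw [← Finset.sum_smul, hb, one_smul]
  refine ⟨part1, ?_⟩
  intro x hx h hh0 hhH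
  have hix : (0:ℝ) ≤ ‖i x‖ := norm_nonneg _
  have hA₁le : ∀ idx : Fin s, ∑ j : Fin s, |a idx j| ≤ A₁ := by
    intro idx
    rw [hA₁]
    have hbdd : BddAbove (Set.range fun idx : Fin s => ∑ j : Fin s, |a idx j|) :=
      Set.Finite.bddAbove (Set.finite_range _)
    exact le_ciSup hbdd idx
  have hA₁0 : 0 ≤ A₁ :=
    le_trans (Finset.sum_nonneg fun j _ => abs_nonneg _) (hA₁le (Classical.arbitrary _))
  have hA₂0 : 0 ≤ A₂ := hA₂ ▸ Finset.sum_nonneg fun _ _ => abs_nonneg _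
  rcases hA₁0.lt_or_eq with hA₁pos | hA₁eq
  swap
  · exfalso
    have h1 : h < 1 / (2 * L₀ * A₁) := lt_of_lt_of_le hhH (hHdef ▸ min_le_left _ _)
    rw [← hA₁eq] at h1
    simp at h1
    linarith
  have hCLpos : 0 < C₁ + L₀ / R₀ := by positivity
  have hH1 : h * (2 * L₀ * A₁) < 1 := by
    have h1 : h < 1 / (2 * L₀ * A₁) := lt_of_lt_of_le hhH (hHdef ▸ min_le_left _ _)
    exact (lt_div_iff₀ (by positivity)).mp h1
  have hH2 : h * (2 * A₁ * (C₁ + L₀ / R₀) * R₀) < 1 := by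
    have h1 : h < 1 / (2 * A₁ * (C₁ + L₀ / R₀) * R₀) :=
      lt_of_lt_of_le hhH (hHdef ▸ (min_le_right _ _).trans (min_le_left _ _))
    exact (lt_div_iff₀ (by positivity)).mp h1
  -- bound on stage norms
  have hKnorm : ∀ u, InBall i (2 * R₀) x u → ∀ idx : Fin s,
      ‖K u h idx‖ ≤ (C₁ + L₀ / R₀) * ‖i x‖ := by
    intro u hu idx
    have h1 := (hK x hx h hh0 hhH u hu).1 idx
    have h2 := hfC x hx
    have h3 : K u h idx = f x + (K u h idx - f x) := by abel
    calc ‖K u h idx‖ = ‖f x + (K u h idx - f x)‖ := by rw [← h3]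
      _ ≤ ‖f x‖ + ‖K u h idx - f x‖ := norm_add_le _ _
      _ ≤ C₁ * ‖i x‖ + L₀ * ‖i x‖ / R₀ := add_le_add h2 h1
      _ = (C₁ + L₀ / R₀) * ‖i x‖ := by field_simp
  have hSum : ∀ u, InBall i (2 * R₀) x u → ∀ idx : Fin s,
      ‖∑ j : Fin s, a idx j • K u h j‖ ≤ A₁ * ((C₁ + L₀ / R₀) * ‖i x‖) := by
    intro u hu idx
    calc ‖∑ j : Fin s, a idx j • K u h j‖ ≤ ∑ j : Fin s, |a idx j| * ‖K u h j‖ := by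
          refine (norm_sum_le _ _).trans ?_
          exact Finset.sum_le_sum fun j _ => le_of_eq (by rw [norm_smul, Real.norm_eq_abs])
      _ ≤ ∑ j : Fin s, |a idx j| * ((C₁ + L₀ / R₀) * ‖i x‖) :=
          Finset.sum_le_sum fun j _ =>
            mul_le_mul_of_nonneg_left (hKnorm u hu j) (abs_nonneg _)
      _ = (∑ j : Fin s, |a idx j|) * ((C₁ + L₀ / R₀) * ‖i x‖) := by rw [Finset.sum_mul]
      _ ≤ A₁ * ((C₁ + L₀ / R₀) * ‖i x‖) :=
          mul_le_mul_of_nonneg_right (hA₁le idx) (by positivity)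
  -- argument points stay in B_{R₀}(x)
  have hball : ∀ u, InBall i (2 * R₀) x u → ∀ idx : Fin s,
      InBall i R₀ x (u + h • ∑ j : Fin s, a idx j • K u h j) := by
    intro u hu idx
    have hs := hSum u hu idx
    have h2 : h * (A₁ * ((C₁ + L₀ / R₀) * ‖i x‖)) ≤ ‖i x‖ / (2 * R₀) := by
      rw [le_div_iff₀ (by positivity)]
      have hint : h * (2 * A₁ * (C₁ + L₀ / R₀) * R₀) * ‖i x‖ ≤ 1 * ‖i x‖ :=
        mul_le_mul_of_nonneg_right hH2.le hix
      have heq : h * (A₁ * ((C₁ + L₀ / R₀) * ‖i x‖)) * (2 * R₀)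
          = h * (2 * A₁ * (C₁ + L₀ / R₀) * R₀) * ‖i x‖ := by ring
      linarith
    show ‖u + h • ∑ j : Fin s, a idx j • K u h j - x‖ ≤ ‖i x‖ / R₀
    have heq : u + h • ∑ j : Fin s, a idx j • K u h j - x
        = (u - x) + h • ∑ j : Fin s, a idx j • K u h j := by abel
    rw [heq]
    have h3 := norm_add_le (u - x) (h • ∑ j : Fin s, a idx j • K u h j)
    rw [norm_smul, Real.norm_of_nonneg hh0] at h3
    have h4 : h * ‖∑ j : Fin s, a idx j • K u h j‖
        ≤ h * (A₁ * ((C₁ + L₀ / R₀) * ‖i x‖)) := mul_le_mul_of_nonneg_left hs hh0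
    have h5 : ‖i x‖ / (2 * R₀) + ‖i x‖ / (2 * R₀) = ‖i x‖ / R₀ := by field_simp; ring
    have hu' : ‖u - x‖ ≤ ‖i x‖ / (2 * R₀) := hu
    linarith
  have hmax2 : (2:ℝ) ≤ max 2 (A₁ * (C₁ + L₀ / R₀)) := le_max_left _ _
  have hmaxA : A₁ * (C₁ + L₀ / R₀) ≤ max 2 (A₁ * (C₁ + L₀ / R₀)) := le_max_right _ _
  constructor
  · -- Lipschitz bound
    intro u v hu hv
    rw [hRdef] at hu hv
    set M := Finset.univ.sup' Finset.univ_nonempty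
      (fun idx : Fin s => ‖K u h idx - K v h idx‖) with hM
    have hMle : ∀ idx : Fin s, ‖K u h idx - K v h idx‖ ≤ M := by
      intro idx
      rw [hM]
      exact Finset.le_sup' (fun idx : Fin s => ‖K u h idx - K v h idx‖) (Finset.mem_univ idx)
    have hM0 : 0 ≤ M := le_trans (norm_nonneg _) (hMle (Classical.arbitrary _))
    have hstage : ∀ idx : Fin s,
        ‖K u h idx - K v h idx‖ ≤ L₀ * ‖u - v‖ + L₀ * h * A₁ * M := by
      intro idx
      rw [(hK x hx h hh0 hhH u hu).2 idx, (hK x hx h hh0 hhH v hv).2 idx]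
      refine (hflip x hx _ _ (hball u hu idx) (hball v hv idx)).trans ?_
      have hsum_eq : (∑ j : Fin s, a idx j • K u h j) - ∑ j : Fin s, a idx j • K v h j
          = ∑ j : Fin s, a idx j • (K u h j - K v h j) := by
        rw [← Finset.sum_sub_distrib]
        exact Finset.sum_congr rfl fun j _ => (smul_sub _ _ _).symm
      have heq : (u + h • ∑ j : Fin s, a idx j • K u h j)
            - (v + h • ∑ j : Fin s, a idx j • K v h j)
          = (u - v) + h • ∑ j : Fin s, a idx j • (K u h j - K v h j) := by
        rw [← hsum_eq, smul_sub]; abel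
      have hΔ : ‖∑ j : Fin s, a idx j • (K u h j - K v h j)‖ ≤ A₁ * M := by
        refine (norm_sum_le _ _).trans ?_
        calc ∑ j : Fin s, ‖a idx j • (K u h j - K v h j)‖
            = ∑ j : Fin s, |a idx j| * ‖K u h j - K v h j‖ :=
              Finset.sum_congr rfl fun j _ => by rw [norm_smul, Real.norm_eq_abs]
          _ ≤ ∑ j : Fin s, |a idx j| * M :=
              Finset.sum_le_sum fun j _ => mul_le_mul_of_nonneg_left (hMle j) (abs_nonneg _)
          _ = (∑ j : Fin s, |a idx j|) * M := by rw [Finset.sum_mul]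
          _ ≤ A₁ * M := mul_le_mul_of_nonneg_right (hA₁le idx) hM0
      have hnorm : ‖(u + h • ∑ j : Fin s, a idx j • K u h j)
            - (v + h • ∑ j : Fin s, a idx j • K v h j)‖ ≤ ‖u - v‖ + h * (A₁ * M) := by
        rw [heq]
        refine (norm_add_le _ _).trans ?_
        rw [norm_smul, Real.norm_of_nonneg hh0]
        have := mul_le_mul_of_nonneg_left hΔ hh0
        linarith
      have h6 := mul_le_mul_of_nonneg_left hnorm hL₀.le
      have h7 : L₀ * (‖u - v‖ + h * (A₁ * M)) = L₀ * ‖u - v‖ + L₀ * h * A₁ * M := by ring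
      linarith
    have hMbound : M ≤ L₀ * ‖u - v‖ + L₀ * h * A₁ * M := by
      conv_lhs => rw [hM]
      exact Finset.sup'_le _ _ fun idx _ => hstage idx
    have hhalf : L₀ * h * A₁ ≤ 1 / 2 := by
      have he : h * (2 * L₀ * A₁) = 2 * (L₀ * h * A₁) := by ring
      linarith
    have hM2 : M ≤ 2 * L₀ * ‖u - v‖ := by
      have h6 : L₀ * h * A₁ * M ≤ 1 / 2 * M := mul_le_mul_of_nonneg_right hhalf hM0
      linarith
    have hfd : ‖ftil u h - ftil v h‖ ≤ A₂ * M := by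
      rw [hftil u h, hftil v h, ← Finset.sum_sub_distrib]
      refine (norm_sum_le _ _).trans ?_
      calc ∑ idx : Fin s, ‖b idx • K u h idx - b idx • K v h idx‖
          = ∑ idx : Fin s, |b idx| * ‖K u h idx - K v h idx‖ :=
            Finset.sum_congr rfl fun j _ => by rw [← smul_sub, norm_smul, Real.norm_eq_abs]
        _ ≤ ∑ idx : Fin s, |b idx| * M :=
            Finset.sum_le_sum fun j _ => mul_le_mul_of_nonneg_left (hMle j) (abs_nonneg _)
        _ = A₂ * M := by rw [← Finset.sum_mul, hA₂]
    have hL2 : 2 * L₀ * A₂ ≤ L := by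
      rw [hLdef]
      have h6 := mul_le_mul_of_nonneg_left hmax2 (mul_nonneg hL₀.le hA₂0)
      have h7 : L₀ * A₂ * 2 = 2 * L₀ * A₂ := by ring
      linarith
    have h7 : A₂ * M ≤ A₂ * (2 * L₀ * ‖u - v‖) := mul_le_mul_of_nonneg_left hM2 hA₂0
    have h8 : 2 * L₀ * A₂ * ‖u - v‖ ≤ L * ‖u - v‖ :=
      mul_le_mul_of_nonneg_right hL2 (norm_nonneg _)
    have h9 : A₂ * (2 * L₀ * ‖u - v‖) = 2 * L₀ * A₂ * ‖u - v‖ := by ring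
    linarith
  · -- consistency bound
    have hxball : InBall i (2 * R₀) x x := by
      simp only [InBall, sub_self, norm_zero]; positivity
    have hstage0 : ∀ idx : Fin s, K x 0 idx = f x := hK0 x hx x hxball
    have hstageh : ∀ idx : Fin s,
        ‖K x h idx - f x‖ ≤ L₀ * (h * (A₁ * ((C₁ + L₀ / R₀) * ‖i x‖))) := by
      intro idx
      rw [(hK x hx h hh0 hhH x hxball).2 idx]
      have hxlip : InBall i R₀ x x := by
        simp only [InBall, sub_self, norm_zero]; positivity
      refine (hflip x hx _ _ (hball x hxball idx) hxlip).trans ?_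
      have heq : x + h • (∑ j : Fin s, a idx j • K x h j) - x
          = h • ∑ j : Fin s, a idx j • K x h j := by abel
      rw [heq, norm_smul, Real.norm_of_nonneg hh0]
      exact mul_le_mul_of_nonneg_left
        (mul_le_mul_of_nonneg_left (hSum x hxball idx) hh0) hL₀.le
    rw [hftil x h, hftil x 0, ← Finset.sum_sub_distrib]
    have step : ‖∑ idx : Fin s, (b idx • K x h idx - b idx • K x 0 idx)‖
        ≤ A₂ * (L₀ * (h * (A₁ * ((C₁ + L₀ / R₀) * ‖i x‖)))) := by
      refine (norm_sum_le _ _).trans ?_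
      calc ∑ idx : Fin s, ‖b idx • K x h idx - b idx • K x 0 idx‖
          = ∑ idx : Fin s, |b idx| * ‖K x h idx - f x‖ :=
            Finset.sum_congr rfl fun j _ => by
              rw [hstage0 j, ← smul_sub, norm_smul, Real.norm_eq_abs]
        _ ≤ ∑ idx : Fin s, |b idx| * (L₀ * (h * (A₁ * ((C₁ + L₀ / R₀) * ‖i x‖)))) :=
            Finset.sum_le_sum fun j _ => mul_le_mul_of_nonneg_left (hstageh j) (abs_nonneg _)
        _ = A₂ * (L₀ * (h * (A₁ * ((C₁ + L₀ / R₀) * ‖i x‖)))) := by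
            rw [← Finset.sum_mul, hA₂]
    refine step.trans ?_
    have hL3 : L₀ * A₂ * (A₁ * (C₁ + L₀ / R₀)) ≤ L := by
      rw [hLdef]
      exact mul_le_mul_of_nonneg_left hmaxA (mul_nonneg hL₀.le hA₂0)
    have h10 := mul_le_mul_of_nonneg_right hL3 (mul_nonneg hh0 hix)
    have heq2 : A₂ * (L₀ * (h * (A₁ * ((C₁ + L₀ / R₀) * ‖i x‖))))
        = L₀ * A₂ * (A₁ * (C₁ + L₀ / R₀)) * (h * ‖i x‖) := by ring
    have heq3 : L * (h * ‖i x‖) = L * h * ‖i x‖ := by ring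
    linarith
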